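/- Let e_1,…,e_m be an orthonormal basis of ℝ^m and K = ℝ^m_+ the nonnegative orthant in these coordinates. A hyperplane H through 0 with unit normal a = (a^1,…,a^m) is K-invariant if and only if a^i a^j ≤ 0 whenever i ≠ j. -/

import Mathlib

open RealInnerProductSpace

noncomputable section

abbrev E (m : ℕ) := EuclideanSpace ℝ (Fin m)

/-- `P` is the metric projection map: for every nonempty closed convex set `D`,
`P D x` lies in `D` and satisfies the variational characterization. -/
def IsProjMap {m : ℕ} (P : Set (E m) → E m → E m) : Prop :=
  ∀ D : Set (E m), D.Nonempty → IsClosed D → Convex ℝ D →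
    ∀ x, P D x ∈ D ∧ ∀ y ∈ D, ⟪P D x - x, P D x - y⟫ ≤ 0

/-- The dual cone of `K`. -/
def dualCone {m : ℕ} (K : Set (E m)) : Set (E m) :=
  {y | ∀ x ∈ K, 0 ≤ ⟪x, y⟫}

/-- `x ⊓ y = P_{x-K} y`. -/
def meet {m : ℕ} (P : Set (E m) → E m → E m) (K : Set (E m)) (x y : E m) : E m :=
  P ((fun k => x - k) '' K) y

/-- `x ⊔ y = P_{x+K} y`. -/
def join {m : ℕ} (P : Set (E m) → E m → E m) (K : Set (E m)) (x y : E m) : E m :=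
  P ((fun k => x + k) '' K) y

/-- `C` is `K`-invariant: closed under `meet` and `join`. -/
def KInv {m : ℕ} (P : Set (E m) → E m → E m) (K C : Set (E m)) : Prop :=
  ∀ x ∈ C, ∀ y ∈ C, meet P K x y ∈ C ∧ join P K x y ∈ C

/-- Uniqueness of the variational characterization of projections. -/
lemma proj_unique {m : ℕ} {P : Set (E m) → E m → E m} (hP : IsProjMap P)
    {D : Set (E m)} (hne : D.Nonempty) (hcl : IsClosed D) (hcv : Convex ℝ D)
    {x p : E m} (hpD : p ∈ D) (hvar : ∀ z ∈ D, ⟪p - x, p - z⟫ ≤ 0) :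
    P D x = p := by
  obtain ⟨hq, hqvar⟩ := hP D hne hcl hcv x
  set q := P D x with hqdef
  have h1 : ⟪q - x, q - p⟫ ≤ 0 := hqvar p hpD
  have h2 : ⟪p - x, p - q⟫ ≤ 0 := hvar q hq
  have hkey : ⟪q - p, q - p⟫ ≤ 0 := by
    have heq : ⟪q - p, q - p⟫ = ⟪q - x, q - p⟫ + ⟪p - x, p - q⟫ := by
      simp only [inner_sub_left, inner_sub_right]
      ring
    rw [heq]; linarith
  have : q - p = 0 := by
    have := real_inner_self_nonpos (x := q - p)
    exact this.1 hkey
  have : q = p := by rwa [sub_eq_zero] at this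
  exact this

lemma set_down_closed {m : ℕ} (x : E m) :
    IsClosed {z : E m | ∀ i, z i ≤ x i} := by
  have : {z : E m | ∀ i, z i ≤ x i} = ⋂ i, {z : E m | z i ≤ x i} := by
    ext z; simp [Set.mem_iInter]
  rw [this]
  exact isClosed_iInter fun i =>
    isClosed_le (EuclideanSpace.proj (𝕜 := ℝ) i).continuous continuous_const

lemma set_up_closed {m : ℕ} (x : E m) :
    IsClosed {z : E m | ∀ i, x i ≤ z i} := by
  have : {z : E m | ∀ i, x i ≤ z i} = ⋂ i, {z : E m | x i ≤ z i} := by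
    ext z; simp [Set.mem_iInter]
  rw [this]
  exact isClosed_iInter fun i =>
    isClosed_le continuous_const (EuclideanSpace.proj (𝕜 := ℝ) i).continuous

lemma meet_apply {m : ℕ} {P : Set (E m) → E m → E m} (hP : IsProjMap P)
    {K : Set (E m)} (hK : K = {x : E m | ∀ i, 0 ≤ x i})
    (x y : E m) (i : Fin m) : meet P K x y i = min (x i) (y i) := by
  set p : E m := WithLp.toLp 2 (fun i => min (x i) (y i)) with hp
  have himg : ((fun k => x - k) '' K) = {z : E m | ∀ i, z i ≤ x i} := by
    ext z
    constructor
    · rintro ⟨k, hk, rfl⟩ i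
      rw [hK] at hk
      have := hk i
      simp only [PiLp.sub_apply]
      linarith
    · intro hz
      refine ⟨x - z, ?_, by ext k; simp [PiLp.sub_apply]⟩
      rw [hK]
      intro i
      simp only [PiLp.sub_apply]
      exact sub_nonneg.2 (hz i)
  have hne : {z : E m | ∀ i, z i ≤ x i}.Nonempty := ⟨x, fun i => le_refl _⟩
  have hcv : Convex ℝ {z : E m | ∀ i, z i ≤ x i} := by
    intro z hz w hw s t hs ht hst i
    have h1 : s * z i ≤ s * x i := mul_le_mul_of_nonneg_left (hz i) hs
    have h2 : t * w i ≤ t * x i := mul_le_mul_of_nonneg_left (hw i) ht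
    have heval : (s • z + t • w) i = s * z i + t * w i := by
      simp [PiLp.add_apply, PiLp.smul_apply, smul_eq_mul]
    calc (s • z + t • w) i = s * z i + t * w i := heval
      _ ≤ s * x i + t * x i := add_le_add h1 h2
      _ = x i := by rw [← add_mul, hst, one_mul]
  have hres : P ((fun k => x - k) '' K) y = p := by
    rw [himg]
    refine proj_unique hP hne (set_down_closed x) hcv (fun i => min_le_left _ _) ?_
    intro z hz
    rw [PiLp.inner_apply]
    refine Finset.sum_nonpos fun i _ => ?_
    simp only [PiLp.sub_apply, RCLike.inner_apply, conj_trivial, hp, PiLp.toLp_apply]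
    rcases le_total (x i) (y i) with h | h
    · rw [min_eq_left h]
      have h1 : x i - y i ≤ 0 := by linarith
      have h2 : 0 ≤ x i - z i := sub_nonneg.2 (hz i)
      rw [mul_comm]; exact mul_nonpos_of_nonpos_of_nonneg h1 h2
    · rw [min_eq_right h]
      simp
  unfold meet
  rw [hres]

lemma join_apply {m : ℕ} {P : Set (E m) → E m → E m} (hP : IsProjMap P)
    {K : Set (E m)} (hK : K = {x : E m | ∀ i, 0 ≤ x i})
    (x y : E m) (i : Fin m) : join P K x y i = max (x i) (y i) := by
  set p : E m := WithLp.toLp 2 (fun i => max (x i) (y i)) with hp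
  have himg : ((fun k => x + k) '' K) = {z : E m | ∀ i, x i ≤ z i} := by
    ext z
    constructor
    · rintro ⟨k, hk, rfl⟩ i
      rw [hK] at hk
      have := hk i
      simp only [PiLp.add_apply]
      linarith
    · intro hz
      refine ⟨z - x, ?_, by ext k; simp [PiLp.add_apply, PiLp.sub_apply]⟩
      rw [hK]
      intro i
      simp only [PiLp.sub_apply]
      exact sub_nonneg.2 (hz i)
  have hne : {z : E m | ∀ i, x i ≤ z i}.Nonempty := ⟨x, fun i => le_refl _⟩
  have hcv : Convex ℝ {z : E m | ∀ i, x i ≤ z i} := by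
    intro z hz w hw s t hs ht hst i
    have h1 : s * x i ≤ s * z i := mul_le_mul_of_nonneg_left (hz i) hs
    have h2 : t * x i ≤ t * w i := mul_le_mul_of_nonneg_left (hw i) ht
    have heval : (s • z + t • w) i = s * z i + t * w i := by
      simp [PiLp.add_apply, PiLp.smul_apply, smul_eq_mul]
    calc x i = s * x i + t * x i := by rw [← add_mul, hst, one_mul]
      _ ≤ s * z i + t * w i := add_le_add h1 h2
      _ = (s • z + t • w) i := heval.symm
  have hres : P ((fun k => x + k) '' K) y = p := by
    rw [himg]
    refine proj_unique hP hne (set_up_closed x) hcv (fun i => le_max_left _ _) ?_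
    intro z hz
    rw [PiLp.inner_apply]
    refine Finset.sum_nonpos fun i _ => ?_
    simp only [PiLp.sub_apply, RCLike.inner_apply, conj_trivial, hp, PiLp.toLp_apply]
    rcases le_total (x i) (y i) with h | h
    · rw [max_eq_right h]
      simp
    · rw [max_eq_left h]
      have h1 : 0 ≤ x i - y i := by linarith
      have h2 : x i - z i ≤ 0 := sub_nonpos.2 (hz i)
      rw [mul_comm]; exact mul_nonpos_of_nonneg_of_nonpos h1 h2
  unfold join
  rw [hres]

/-- Key algebraic lemma: if off-diagonal products of `a` are nonpositive and
`∑ a i * d i = 0`, then `∑ a i * (d i)⁺ = 0`. -/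
lemma key_sum {m : ℕ} (a d : Fin m → ℝ)
    (hsign : ∀ i j, i ≠ j → a i * a j ≤ 0)
    (hd : ∑ i, a i * d i = 0) : ∑ i, a i * max (d i) 0 = 0 := by
  set s := ∑ i, a i * max (d i) 0 with hs
  set t := ∑ i, a i * max (-d i) 0 with ht
  have hst : s - t = 0 := by
    have hterm : ∀ i, a i * max (d i) 0 - a i * max (-d i) 0 = a i * d i := by
      intro i
      rcases le_total (d i) 0 with h | h
      · rw [max_eq_right h, max_eq_left (by linarith : (0:ℝ) ≤ -d i)]; ring
      · rw [max_eq_left h, max_eq_right (by linarith : -d i ≤ (0:ℝ))]; ring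
    rw [hs, ht, ← Finset.sum_sub_distrib]
    rw [Finset.sum_congr rfl fun i _ => hterm i]
    exact hd
  have hprod : s * t ≤ 0 := by
    rw [hs, ht, Finset.sum_mul_sum]
    refine Finset.sum_nonpos fun i _ => Finset.sum_nonpos fun j _ => ?_
    by_cases hij : i = j
    · subst hij
      have h0 : max (d i) 0 * max (-d i) 0 = 0 := by
        rcases le_total (d i) 0 with h | h
        · rw [max_eq_right h]; ring
        · rw [max_eq_right (by linarith : -d i ≤ (0:ℝ))]; ring
      calc a i * max (d i) 0 * (a i * max (-d i) 0)
          = a i * a i * (max (d i) 0 * max (-d i) 0) := by ring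
        _ = 0 := by rw [h0]; ring
        _ ≤ 0 := le_refl _
    · have hx : (0:ℝ) ≤ max (d i) 0 := le_max_right _ _
      have hy : (0:ℝ) ≤ max (-d j) 0 := le_max_right _ _
      calc a i * max (d i) 0 * (a j * max (-d j) 0)
          = a i * a j * (max (d i) 0 * max (-d j) 0) := by ring
        _ ≤ 0 := mul_nonpos_of_nonpos_of_nonneg (hsign i j hij) (mul_nonneg hx hy)
  have hsq : s * s ≤ 0 := by
    have : s = t := by linarith
    rw [this] at hprod ⊢
    exact hprod
  nlinarith

theorem orthant_hyperplane_invariance (m : ℕ)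
    (P : Set (E m) → E m → E m) (hP : IsProjMap P)
    (K : Set (E m)) (hK : K = {x : E m | ∀ i, 0 ≤ x i})
    (a : E m) (ha : ‖a‖ = 1)
    (H : Set (E m)) (hH : H = {x : E m | ⟪a, x⟫ = 0}) :
    KInv P K H ↔ ∀ i j, i ≠ j → a i * a j ≤ 0 := by
  have hmem : ∀ z : E m, z ∈ H ↔ ∑ i, a i * z i = 0 := by
    intro z
    rw [hH]
    simp [PiLp.inner_apply, RCLike.inner_apply, conj_trivial, mul_comm]
  have hmeet := meet_apply hP hK
  have hjoin := join_apply hP hK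
  constructor
  · intro hinv i j hij
    by_contra hpos
    push_neg at hpos
    set d : E m := EuclideanSpace.single i (a j) - EuclideanSpace.single j (a i) with hd
    have hdi : d i = a j := by
      simp [hd, PiLp.sub_apply, EuclideanSpace.single_apply, hij, Ne.symm hij]
    have hdj : d j = -a i := by
      simp [hd, PiLp.sub_apply, EuclideanSpace.single_apply, hij, Ne.symm hij]
    have hdk : ∀ k, k ≠ i → k ≠ j → d k = 0 := by
      intro k hki hkj
      simp [hd, PiLp.sub_apply, EuclideanSpace.single_apply, hki, hkj]
    have hdH : d ∈ H := by
      rw [hmem]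
      have : ∑ k, a k * d k = ∑ k ∈ ({i, j} : Finset (Fin m)), a k * d k := by
        refine (Finset.sum_subset (Finset.subset_univ _) ?_).symm
        intro k _ hk
        simp only [Finset.mem_insert, Finset.mem_singleton, not_or] at hk
        rw [hdk k hk.1 hk.2]; ring
      rw [this, Finset.sum_pair hij, hdi, hdj]; ring
    have h0H : (0 : E m) ∈ H := by
      rw [hmem]; simp
    have hmH : meet P K d 0 ∈ H := (hinv d hdH 0 h0H).1
    rw [hmem] at hmH
    have hval : ∀ k, meet P K d 0 k = min (d k) 0 := by
      intro k
      rw [hmeet d 0 k]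
      simp
    have hsum : ∑ k, a k * min (d k) 0 = a i * min (d i) 0 + a j * min (d j) 0 := by
      have : ∑ k, a k * min (d k) 0 = ∑ k ∈ ({i, j} : Finset (Fin m)), a k * min (d k) 0 := by
        refine (Finset.sum_subset (Finset.subset_univ _) ?_).symm
        intro k _ hk
        simp only [Finset.mem_insert, Finset.mem_singleton, not_or] at hk
        rw [hdk k hk.1 hk.2]; simp
      rw [this, Finset.sum_pair hij]
    have hmH' : a i * min (d i) 0 + a j * min (d j) 0 = 0 := by
      rw [← hsum, ← hmH]
      exact Finset.sum_congr rfl fun k _ => by rw [hval k]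
    rw [hdi, hdj] at hmH'
    rcases mul_pos_iff.1 hpos with ⟨h1, h2⟩ | ⟨h1, h2⟩
    · rw [min_eq_right h2.le, min_eq_left (by linarith : -a i ≤ (0:ℝ))] at hmH'
      nlinarith
    · rw [min_eq_left h2.le, min_eq_right (by linarith : (0:ℝ) ≤ -a i)] at hmH'
      nlinarith
  · intro hsign x hx y hy
    rw [hmem] at hx hy
    constructor
    · rw [hmem]
      have hk := key_sum (fun i => a i) (fun i => x i - y i) hsign
        (by simp only [mul_sub]; rw [Finset.sum_sub_distrib, hx, hy]; ring)
      have : ∀ k, meet P K x y k = x k - max (x k - y k) 0 := by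
        intro k
        rw [hmeet x y k]
        rcases le_total (x k) (y k) with h | h
        · rw [min_eq_left h, max_eq_right (by linarith : x k - y k ≤ (0:ℝ))]; ring
        · rw [min_eq_right h, max_eq_left (by linarith : (0:ℝ) ≤ x k - y k)]; ring
      calc ∑ k, a k * meet P K x y k
          = ∑ k, (a k * x k - a k * max (x k - y k) 0) := by
            refine Finset.sum_congr rfl fun k _ => ?_
            rw [this k]; ring
        _ = ∑ k, a k * x k - ∑ k, a k * max (x k - y k) 0 := Finset.sum_sub_distrib _ _
        _ = 0 := by rw [hx, hk]; ring
    · rw [hmem]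
      have hk := key_sum (fun i => a i) (fun i => y i - x i) hsign
        (by simp only [mul_sub]; rw [Finset.sum_sub_distrib, hx, hy]; ring)
      have : ∀ k, join P K x y k = x k + max (y k - x k) 0 := by
        intro k
        rw [hjoin x y k]
        rcases le_total (x k) (y k) with h | h
        · rw [max_eq_right h, max_eq_left (by linarith : (0:ℝ) ≤ y k - x k)]; ring
        · rw [max_eq_left h, max_eq_right (by linarith : y k - x k ≤ (0:ℝ))]; ring
      calc ∑ k, a k * join P K x y k
          = ∑ k, (a k * x k + a k * max (y k - x k) 0) := by
            refine Finset.sum_congr rfl fun k _ => ?_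
            rw [this k]; ring
        _ = ∑ k, a k * x k + ∑ k, a k * max (y k - x k) 0 := Finset.sum_add_distrib
        _ = 0 := by rw [hx, hk]; ring
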